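/- Let P, Q be strings of positive length p, let n be a positive integer, and set d = ⌊n/p⌋ and r = n mod p. Let X = P^∞[0..n) and Y = Q^∞[0..n). Then ED(X, Y) ≤ ED(P[0..r), Q[0..r)) + min over integers s of (d · ED(P, Q^{↻s}) + 2|s|), and this quantity is at most 3 · ED(X, Y). -/

import Mathlib

/-- Costs for edit operations (removed from Mathlib; old definition restored). -/
structure Levenshtein.Cost (α β δ : Type*) where
  /-- Cost to delete an element from a list. -/
  delete : α → δ
  /-- Cost in insert an element into a list. -/
  insert : β → δ
  /-- Cost to substitute one element for another in a list. -/
  substitute : α → β → δ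

/-- The default cost structure, for which all operations cost `1`. -/
def Levenshtein.defaultCost {α : Type*} [DecidableEq α] : Levenshtein.Cost α α ℕ where
  delete _ := 1
  insert _ := 1
  substitute a b := if a = b then 0 else 1

/-- (Private) helper for `suffixLevenshtein`. -/
def Levenshtein.impl {α β δ : Type*} [Add δ] [Zero δ] [Min δ] (C : Levenshtein.Cost α β δ)
    (xs : List α) (y : β) (d : {r : List δ // 0 < r.length}) : {r : List δ // 0 < r.length} :=
  let ⟨ds, w⟩ := d
  xs.zip (ds.zip ds.tail) |>.foldr
    (init := ⟨[C.insert y + ds.getLast (List.ne_nil_of_length_pos w)], by simp⟩)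
    (fun ⟨x, d₀, d₁⟩ ⟨r, w⟩ =>
      ⟨min (C.delete x + r[0]) (min (C.insert y + d₀) (C.substitute x y + d₁)) :: r, by simp⟩)

/-- `suffixLevenshtein C xs ys` computes the list of Levenshtein distances
from each suffix of `xs` to `ys`. -/
def suffixLevenshtein {α β δ : Type*} [Add δ] [Zero δ] [Min δ] (C : Levenshtein.Cost α β δ)
    (xs : List α) (ys : List β) : {r : List δ // 0 < r.length} :=
  ys.foldr
    (Levenshtein.impl C xs)
    (xs.foldr (init := ⟨[0], by simp⟩) (fun a ⟨r, w⟩ => ⟨(C.delete a + r[0]) :: r, by simp⟩))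

/-- The Levenshtein distance between two lists. -/
def levenshtein {α β δ : Type*} [Add δ] [Zero δ] [Min δ] (C : Levenshtein.Cost α β δ)
    (xs : List α) (ys : List β) : δ :=
  let ⟨r, w⟩ := suffixLevenshtein C xs ys
  r[0]

/-- Levenshtein edit distance between two lists (unit costs). -/
def ED {α : Type*} [DecidableEq α] (X Y : List α) : ℕ :=
  levenshtein Levenshtein.defaultCost X Y

/-- The length-`n` prefix `P^∞[0..n)` of the infinite repetition of `P`. -/
def prefRep {α : Type*} (P : List α) (n : ℕ) : List α :=
  ((List.replicate n P).flatten).take n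

/-- Cyclic rotation of `Q` by an integer `s` (taken modulo `|Q|`). -/
def rotZ {α : Type*} (Q : List α) (s : ℤ) : List α :=
  Q.rotate (s % (Q.length : ℤ)).toNat


namespace Levenshtein

theorem defaultCost_substitute {α : Type*} [DecidableEq α] (a b : α) :
    (defaultCost (α := α)).substitute a b = if a = b then 0 else 1 := rfl

theorem impl_cons {α β δ : Type*} [Add δ] [Zero δ] [Min δ] (C : Cost α β δ)
    (x : α) (xs : List α) (y : β) (d : δ) (ds : List δ) (w : 0 < (d :: ds).length)
    (w' : 0 < List.length ds) :
    impl C (x :: xs) y ⟨d :: ds, w⟩ =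
      let ⟨r, w⟩ := impl C xs y ⟨ds, w'⟩
      ⟨min (C.delete x + r[0]) (min (C.insert y + d) (C.substitute x y + ds[0])) :: r, by simp⟩ :=
  match ds, w' with | _ :: _, _ => rfl

theorem impl_cons_fst_zero {α β δ : Type*} [Add δ] [Zero δ] [Min δ] (C : Cost α β δ)
    (x : α) (xs : List α) (y : β) (d : δ) (ds : List δ) (w : 0 < (d :: ds).length)
    (h : 0 < (impl C (x :: xs) y ⟨d :: ds, w⟩).val.length)
    (w' : 0 < List.length ds) :
    (impl C (x :: xs) y ⟨d :: ds, w⟩).1[0] =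
      let ⟨r, w⟩ := impl C xs y ⟨ds, w'⟩
      min (C.delete x + r[0]) (min (C.insert y + d) (C.substitute x y + ds[0])) :=
  match ds, w' with | _ :: _, _ => rfl

theorem impl_length {α β δ : Type*} [Add δ] [Zero δ] [Min δ] (C : Cost α β δ)
    (xs : List α) (y : β) (d : {r : List δ // 0 < r.length}) (w : d.1.length = xs.length + 1) :
    (impl C xs y d).1.length = xs.length + 1 := by
  induction xs generalizing d with
  | nil => rfl
  | cons x xs ih =>
    match d, w with
    | ⟨d₁ :: d₂ :: ds, _⟩, w =>
      rw [impl_cons C x xs y d₁ (d₂ :: ds) _ (by simp)]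
      simp only [List.length_cons]
      congr 1
      exact ih ⟨d₂ :: ds, (by simp)⟩ (by simpa using w)

theorem impl_nil {α β δ : Type*} [Add δ] [Zero δ] [Min δ] (C : Cost α β δ)
    (y : β) (a : δ) (w : 0 < [a].length) :
    impl C [] y ⟨[a], w⟩ = ⟨[C.insert y + a], by simp⟩ := rfl

end Levenshtein

open Levenshtein in
theorem suffixLevenshtein_length {α β δ : Type*} [Add δ] [Zero δ] [Min δ] (C : Cost α β δ)
    (xs : List α) (ys : List β) :
    (suffixLevenshtein C xs ys).1.length = xs.length + 1 := by
  induction ys with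
  | nil =>
    dsimp [suffixLevenshtein]
    induction xs with
    | nil => rfl
    | cons _ xs ih => simp_all
  | cons y ys ih =>
    show (impl C xs y (suffixLevenshtein C xs ys)).1.length = _
    rw [impl_length]
    exact ih

theorem suffixLevenshtein_cons₁_aux {α} {x y : { l : List α // 0 < l.length }}
    (w₀ : x.1[0]'x.2 = y.1[0]'y.2) (w : x.1.tail = y.1.tail) : x = y := by
  match x, y with
  | ⟨hx :: tx, _⟩, ⟨hy :: ty, _⟩ => simp_all

open Levenshtein in
theorem suffixLevenshtein_cons₁ {α β δ : Type*} [Add δ] [Zero δ] [Min δ] (C : Cost α β δ)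
    (x : α) (xs : List α) (ys : List β) :
    suffixLevenshtein C (x :: xs) ys =
      ⟨levenshtein C (x :: xs) ys :: (suffixLevenshtein C xs ys).1, by simp⟩ := by
  induction ys with
  | nil => rfl
  | cons y ys ih =>
    apply suffixLevenshtein_cons₁_aux
    · rfl
    · show (impl C (x :: xs) y (suffixLevenshtein C (x :: xs) ys)).1.tail = _
      rw [ih, impl_cons]
      · rfl
      · simp [suffixLevenshtein_length]

open Levenshtein in
theorem levenshtein_cons_cons {α β δ : Type*} [Add δ] [Zero δ] [Min δ] (C : Cost α β δ)
    (x : α) (xs : List α) (y : β) (ys : List β) :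
    levenshtein C (x :: xs) (y :: ys) =
      min (C.delete x + levenshtein C xs (y :: ys))
        (min (C.insert y + levenshtein C (x :: xs) ys)
          (C.substitute x y + levenshtein C xs ys)) := by
  show (impl C (x :: xs) y (suffixLevenshtein C (x :: xs) ys)).1[0]'(by simp [impl_length, suffixLevenshtein_length]) = _
  simp only [suffixLevenshtein_cons₁]
  rw [impl_cons_fst_zero]
  · rfl

@[simp]
theorem levenshtein_nil_nil {α β δ : Type*} [Add δ] [Zero δ] [Min δ] (C : Levenshtein.Cost α β δ) :
    levenshtein C ([] : List α) ([] : List β) = 0 := rfl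

open Levenshtein in
theorem levenshtein_cons_nil {α β δ : Type*} [Add δ] [Zero δ] [Min δ] (C : Cost α β δ)
    (x : α) (xs : List α) :
    levenshtein C (x :: xs) ([] : List β) = C.delete x + levenshtein C xs [] := rfl

open Levenshtein in
theorem levenshtein_nil_cons {α β δ : Type*} [Add δ] [Zero δ] [Min δ] (C : Cost α β δ)
    (y : β) (ys : List β) :
    levenshtein C ([] : List α) (y :: ys) = C.insert y + levenshtein C [] ys := by
  have h : ∀ s : {r : List δ // 0 < r.length}, (hs : s.1.length = 1) →
      (impl C ([] : List α) y s).1[0]'(by rw [impl_length C [] y s (by simpa using hs)]; simp)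
        = C.insert y + s.1[0]'s.2 := by
    rintro ⟨l, hl⟩ h1
    obtain ⟨a, rfl⟩ := List.length_eq_one_iff.mp h1
    rfl
  exact h (suffixLevenshtein C [] ys) (suffixLevenshtein_length C [] ys)

namespace EDAux

set_option linter.unusedSectionVars false

/-- Edit scripts: `Ed xs ys n` means `xs` can be turned into `ys` with `n` unit-cost edits. -/
inductive Ed {α : Type*} : List α → List α → ℕ → Prop
  | nil : Ed [] [] 0
  | copy (x : α) {xs ys n} : Ed xs ys n → Ed (x :: xs) (x :: ys) n
  | subst (x y : α) {xs ys n} : Ed xs ys n → Ed (x :: xs) (y :: ys) (n + 1)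
  | del (x : α) {xs ys n} : Ed xs ys n → Ed (x :: xs) ys (n + 1)
  | ins (y : α) {xs ys n} : Ed xs ys n → Ed xs (y :: ys) (n + 1)

section Levenshtein

variable {α : Type*} [DecidableEq α]

local notation "ED" => levenshtein (Levenshtein.defaultCost (α := α))

theorem lev_del_le (x : α) (xs ys : List α) : ED (x :: xs) ys ≤ 1 + ED xs ys := by
  cases ys with
  | nil => rw [levenshtein_cons_nil]; exact le_of_eq rfl
  | cons y ys =>
      rw [levenshtein_cons_cons]
      exact min_le_left _ _


theorem lev_ins_le (y : α) (xs ys : List α) : ED xs (y :: ys) ≤ 1 + ED xs ys := by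
  cases xs with
  | nil => rw [levenshtein_nil_cons]; exact le_of_eq rfl
  | cons x xs =>
      rw [levenshtein_cons_cons]
      exact le_trans (min_le_right _ _) (min_le_left _ _)

theorem lev_subst_le (x y : α) (xs ys : List α) :
    ED (x :: xs) (y :: ys) ≤ 1 + ED xs ys := by
  rw [levenshtein_cons_cons]
  refine le_trans (min_le_right _ _) (le_trans (min_le_right _ _) ?_)
  have : (Levenshtein.defaultCost.substitute x y : ℕ) ≤ 1 := by
    simp only [Levenshtein.defaultCost_substitute]; split <;> omega
  omega

theorem lev_copy_le (x : α) (xs ys : List α) :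
    ED (x :: xs) (x :: ys) ≤ ED xs ys := by
  rw [levenshtein_cons_cons]
  refine le_trans (min_le_right _ _) (le_trans (min_le_right _ _) ?_)
  simp [Levenshtein.defaultCost]

theorem ed_sound {xs ys : List α} {n : ℕ} (h : Ed xs ys n) : ED xs ys ≤ n := by
  induction h with
  | nil => simp
  | copy x h ih => exact le_trans (lev_copy_le _ _ _) ih
  | subst x y h ih => exact le_trans (lev_subst_le _ _ _ _) (by omega)
  | del x h ih => exact le_trans (lev_del_le _ _ _) (by omega)
  | ins y h ih => exact le_trans (lev_ins_le _ _ _) (by omega)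

theorem ed_nil_left (ys : List α) : Ed [] ys ys.length := by
  induction ys with
  | nil => exact Ed.nil
  | cons y ys ih => exact Ed.ins y ih

theorem ed_nil_right (xs : List α) : Ed xs [] xs.length := by
  induction xs with
  | nil => exact Ed.nil
  | cons x xs ih => exact Ed.del x ih

theorem lev_nil_left (ys : List α) : ED [] ys = ys.length := by
  induction ys with
  | nil => simp
  | cons y ys ih =>
      have h1 : (Levenshtein.defaultCost.insert y : ℕ) = 1 := rfl
      rw [levenshtein_nil_cons, h1, ih, List.length_cons, Nat.add_comm]

theorem lev_nil_right (xs : List α) : ED xs [] = xs.length := by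
  induction xs with
  | nil => simp
  | cons x xs ih =>
      have h1 : (Levenshtein.defaultCost.delete x : ℕ) = 1 := rfl
      rw [levenshtein_cons_nil, h1, ih, List.length_cons, Nat.add_comm]

theorem ed_complete (xs ys : List α) : Ed xs ys (ED xs ys) := by
  induction xs generalizing ys with
  | nil => rw [lev_nil_left]; exact ed_nil_left ys
  | cons x xs ihx =>
      induction ys with
      | nil => rw [lev_nil_right]; exact ed_nil_right _
      | cons y ys ihy =>
          rw [levenshtein_cons_cons]
          rcases Nat.lt_or_ge (Levenshtein.defaultCost.delete x + ED xs (y :: ys))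
            (min (Levenshtein.defaultCost.insert y + ED (x :: xs) ys)
              (Levenshtein.defaultCost.substitute x y + ED xs ys)) with h | h
          · rw [min_eq_left h.le]
            show Ed _ _ (1 + ED xs (y :: ys))
            rw [Nat.add_comm]
            exact Ed.del x (ihx (y :: ys))
          · rw [min_eq_right h]
            rcases Nat.lt_or_ge (Levenshtein.defaultCost.insert y + ED (x :: xs) ys)
              (Levenshtein.defaultCost.substitute x y + ED xs ys) with h2 | h2
            · rw [min_eq_left h2.le]
              show Ed _ _ (1 + ED (x :: xs) ys)
              rw [Nat.add_comm]
              exact Ed.ins y ihy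
            · rw [min_eq_right h2]
              by_cases hxy : x = y
              · have hs : (Levenshtein.defaultCost.substitute x y : ℕ) = 0 := by
                  simp [Levenshtein.defaultCost, hxy]
                rw [hs, Nat.zero_add, hxy]
                exact Ed.copy y (ihx ys)
              · have hs : (Levenshtein.defaultCost.substitute x y : ℕ) = 1 := by
                  simp [Levenshtein.defaultCost, hxy]
                rw [hs, Nat.add_comm]
                exact Ed.subst x y (ihx ys)


end Levenshtein

section EdStruct

variable {α : Type*}

theorem Ed.symm {xs ys : List α} {n : ℕ} (h : Ed xs ys n) : Ed ys xs n := by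
  induction h with
  | nil => exact Ed.nil
  | copy x h ih => exact Ed.copy x ih
  | subst x y h ih => exact Ed.subst y x ih
  | del x h ih => exact Ed.ins x ih
  | ins y h ih => exact Ed.del y ih

theorem Ed.refl (xs : List α) : Ed xs xs 0 := by
  induction xs with
  | nil => exact Ed.nil
  | cons x xs ih => exact Ed.copy x ih

theorem Ed.append {a b c d : List α} {m n : ℕ} (h1 : Ed a c m) (h2 : Ed b d n) :
    Ed (a ++ b) (c ++ d) (m + n) := by
  induction h1 with
  | nil => simpa using h2
  | copy x h ih => exact Ed.copy x ih
  | subst x y h ih => simpa [Nat.add_right_comm] using Ed.subst x y ih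
  | del x h ih => simpa [Nat.add_right_comm] using Ed.del x ih
  | ins y h ih => simpa [Nat.add_right_comm] using Ed.ins y ih

theorem Ed.length_le {xs ys : List α} {n : ℕ} (h : Ed xs ys n) :
    xs.length ≤ ys.length + n ∧ ys.length ≤ xs.length + n := by
  induction h with
  | nil => simp
  | copy x h ih => simp only [List.length_cons]; omega
  | subst x y h ih => simp only [List.length_cons]; omega
  | del x h ih => simp only [List.length_cons]; omega
  | ins y h ih => simp only [List.length_cons]; omega

/-- Splitting an edit script according to a split of the source. -/
theorem Ed.split {xs ys : List α} {k : ℕ} (h : Ed xs ys k) :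
    ∀ a b : List α, xs = a ++ b →
      ∃ c d k₁ k₂, ys = c ++ d ∧ k = k₁ + k₂ ∧ Ed a c k₁ ∧ Ed b d k₂ := by
  induction h with
  | nil =>
      rintro a b hab
      rcases List.append_eq_nil_iff.mp hab.symm with ⟨rfl, rfl⟩
      exact ⟨[], [], 0, 0, rfl, rfl, Ed.nil, Ed.nil⟩
  | copy x h ih =>
      rintro a b hab
      cases a with
      | nil =>
          rw [List.nil_append] at hab; subst hab
          exact ⟨[], _, 0, _, rfl, (Nat.zero_add _).symm, Ed.nil, Ed.copy x h⟩
      | cons a0 a' =>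
          simp only [List.cons_append, List.cons.injEq] at hab
          obtain ⟨rfl, hab⟩ := hab
          obtain ⟨c, d, k₁, k₂, rfl, rfl, hc, hd⟩ := ih a' b hab
          exact ⟨x :: c, d, k₁, k₂, rfl, rfl, Ed.copy x hc, hd⟩
  | subst x y h ih =>
      rintro a b hab
      cases a with
      | nil =>
          rw [List.nil_append] at hab; subst hab
          exact ⟨[], _, 0, _, rfl, (Nat.zero_add _).symm, Ed.nil, Ed.subst x y h⟩
      | cons a0 a' =>
          simp only [List.cons_append, List.cons.injEq] at hab
          obtain ⟨rfl, hab⟩ := hab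
          obtain ⟨c, d, k₁, k₂, rfl, rfl, hc, hd⟩ := ih a' b hab
          exact ⟨y :: c, d, k₁ + 1, k₂, rfl, by omega, Ed.subst x y hc, hd⟩
  | del x h ih =>
      rintro a b hab
      cases a with
      | nil =>
          rw [List.nil_append] at hab; subst hab
          exact ⟨[], _, 0, _, rfl, (Nat.zero_add _).symm, Ed.nil, Ed.del x h⟩
      | cons a0 a' =>
          simp only [List.cons_append, List.cons.injEq] at hab
          obtain ⟨rfl, hab⟩ := hab
          obtain ⟨c, d, k₁, k₂, rfl, rfl, hc, hd⟩ := ih a' b hab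
          exact ⟨c, d, k₁ + 1, k₂, rfl, by omega, Ed.del x hc, hd⟩
  | ins y h ih =>
      rintro a b hab
      obtain ⟨c, d, k₁, k₂, rfl, rfl, hc, hd⟩ := ih a b hab
      exact ⟨y :: c, d, k₁ + 1, k₂, rfl, by omega, Ed.ins y hc, hd⟩

/-- Composition of edit scripts (triangle inequality). -/
theorem Ed.comp : ∀ N {xs ys zs : List α} {m n : ℕ},
    xs.length + ys.length + zs.length ≤ N →
    Ed xs ys m → Ed ys zs n → ∃ k ≤ m + n, Ed xs zs k := by
  intro N
  induction N with
  | zero =>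
      intro xs ys zs m n hlen h1 h2
      have hx : xs = [] := by cases xs <;> simp_all
      have hy : ys = [] := by cases ys <;> [skip; (cases xs <;> simp_all)]; rfl
      have hz : zs = [] := by cases zs <;> simp_all
      subst hx; subst hy; subst hz
      exact ⟨0, by omega, Ed.nil⟩
  | succ N IH =>
      intro xs ys zs m n hlen h1 h2
      cases h2 with
      | nil =>
          -- ys = [], zs = []
          exact ⟨m, by omega, h1⟩
      | ins z h2' =>
          obtain ⟨k, hk, hed⟩ := IH (by simp_all; omega) h1 h2'
          exact ⟨k + 1, by omega, Ed.ins z hed⟩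
      | copy y h2' =>
          -- ys = y :: ys', zs = y :: zs'
          cases h1 with
          | copy x h1' =>
              obtain ⟨k, hk, hed⟩ := IH (by simp_all; omega) h1' h2'
              exact ⟨k, by omega, Ed.copy y hed⟩
          | subst x y' h1' =>
              obtain ⟨k, hk, hed⟩ := IH (by simp_all; omega) h1' h2'
              exact ⟨k + 1, by omega, Ed.subst x y hed⟩
          | del x h1' =>
              obtain ⟨k, hk, hed⟩ := IH (by simp_all; omega) h1' (Ed.copy y h2')
              exact ⟨k + 1, by omega, Ed.del x hed⟩
          | ins y' h1' =>
              obtain ⟨k, hk, hed⟩ := IH (by simp_all; omega) h1' h2'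
              exact ⟨k + 1, by omega, Ed.ins y hed⟩
      | subst y z h2' =>
          cases h1 with
          | copy x h1' =>
              obtain ⟨k, hk, hed⟩ := IH (by simp_all; omega) h1' h2'
              exact ⟨k + 1, by omega, Ed.subst y z hed⟩
          | subst x y' h1' =>
              obtain ⟨k, hk, hed⟩ := IH (by simp_all; omega) h1' h2'
              exact ⟨k + 1, by omega, Ed.subst x z hed⟩
          | del x h1' =>
              obtain ⟨k, hk, hed⟩ := IH (by simp_all; omega) h1' (Ed.subst y z h2')
              exact ⟨k + 1, by omega, Ed.del x hed⟩
          | ins y' h1' =>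
              obtain ⟨k, hk, hed⟩ := IH (by simp_all; omega) h1' h2'
              exact ⟨k + 1, by omega, Ed.ins z hed⟩
      | del y h2' =>
          cases h1 with
          | copy x h1' =>
              obtain ⟨k, hk, hed⟩ := IH (by simp_all; omega) h1' h2'
              exact ⟨k + 1, by omega, Ed.del y hed⟩
          | subst x y' h1' =>
              obtain ⟨k, hk, hed⟩ := IH (by simp_all; omega) h1' h2'
              exact ⟨k + 1, by omega, Ed.del x hed⟩
          | del x h1' =>
              obtain ⟨k, hk, hed⟩ := IH (by simp_all; omega) h1' (Ed.del y h2')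
              exact ⟨k + 1, by omega, Ed.del x hed⟩
          | ins y' h1' =>
              obtain ⟨k, hk, hed⟩ := IH (by simp_all; omega) h1' h2'
              exact ⟨k, by omega, hed⟩

end EdStruct

section EDFacts

variable {α : Type*} [DecidableEq α]

theorem ED_symm (xs ys : List α) : ED xs ys = ED ys xs :=
  le_antisymm (ed_sound (ed_complete ys xs).symm) (ed_sound (ed_complete xs ys).symm)

theorem ED_triangle (xs ys zs : List α) : ED xs zs ≤ ED xs ys + ED ys zs := by
  obtain ⟨k, hk, hed⟩ := Ed.comp (xs.length + ys.length + zs.length) le_rfl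
    (ed_complete xs ys) (ed_complete ys zs)
  exact le_trans (ed_sound hed) hk

theorem ED_append_le (a b c d : List α) : ED (a ++ b) (c ++ d) ≤ ED a c + ED b d :=
  ed_sound ((ed_complete a c).append (ed_complete b d))

theorem ED_length_le (xs ys : List α) :
    xs.length ≤ ys.length + ED xs ys ∧ ys.length ≤ xs.length + ED xs ys :=
  (ed_complete xs ys).length_le

/-- `J m Q = Q^m`. -/
def J (m : ℕ) (Q : List α) : List α := (List.replicate m Q).flatten

omit [DecidableEq α] in
theorem J_succ (m : ℕ) (Q : List α) : J (m + 1) Q = Q ++ J m Q := by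
  show (List.replicate (m + 1) Q).flatten = Q ++ (List.replicate m Q).flatten
  rw [List.replicate_succ, List.flatten_cons]

omit [DecidableEq α] in
theorem J_add (m k : ℕ) (Q : List α) : J (m + k) Q = J m Q ++ J k Q := by
  show (List.replicate (m + k) Q).flatten = _
  rw [List.replicate_add, List.flatten_append]; rfl

omit [DecidableEq α] in
theorem J_length (m : ℕ) (Q : List α) : (J m Q).length = m * Q.length := by
  induction m with
  | zero => show ([] : List α).length = 0 * Q.length; simp
  | succ m ih => rw [J_succ, List.length_append, ih]; ring

theorem ED_pow_le (d : ℕ) (P R : List α) : ED (J d P) (J d R) ≤ d * ED P R := by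
  induction d with
  | zero => simp only [Nat.zero_mul, Nat.le_zero]; rfl
  | succ d ih =>
      rw [J_succ, J_succ]
      calc ED (P ++ J d P) (R ++ J d R) ≤ ED P R + ED (J d P) (J d R) := ED_append_le _ _ _ _
      _ ≤ ED P R + d * ED P R := by omega
      _ = (d + 1) * ED P R := by ring

theorem ED_take_take (U : List α) (a b : ℕ) (hab : a ≤ b) :
    ED (U.take a) (U.take b) ≤ b - a := by
  have h : U.take b = U.take a ++ (U.drop a).take (b - a) := by
    rw [← List.take_add]; congr 1; omega
  rw [h]
  have h2 : Ed (U.take a ++ []) (U.take a ++ (U.drop a).take (b - a))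
      (0 + ((U.drop a).take (b - a)).length) :=
    Ed.append (Ed.refl (U.take a)) (ed_nil_left _)
  rw [List.append_nil] at h2
  refine le_trans (ed_sound h2) ?_
  rw [Nat.zero_add]
  exact le_trans (List.length_take_le _ _) le_rfl

theorem ED_drop_drop (U : List α) (a b : ℕ) (hab : a ≤ b) :
    ED (U.drop a) (U.drop b) ≤ b - a := by
  have h : U.drop a = (U.drop a).take (b - a) ++ U.drop b := by
    conv_lhs => rw [← List.take_append_drop (b - a) (U.drop a)]
    rw [List.drop_drop]; congr 2; omega
  conv_lhs => rw [h]
  have h2 : Ed ((U.drop a).take (b - a) ++ U.drop b) (U.drop b)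
      (((U.drop a).take (b - a)).length + 0) :=
    Ed.append (ed_nil_right _) (Ed.refl _)
  refine le_trans (ed_sound h2) ?_
  rw [Nat.add_zero]
  exact List.length_take_le _ _

omit [DecidableEq α] in
theorem J_take (m t : ℕ) (Q : List α) (hm : 1 ≤ m) (ht : t ≤ Q.length) :
    (J m Q).take t = Q.take t := by
  obtain ⟨m', rfl⟩ : ∃ m', m = m' + 1 := ⟨m - 1, by omega⟩
  rw [Nat.add_comm, J_add, show J 1 Q = Q by
    show (List.replicate 1 Q).flatten = Q; simp]
  rw [List.take_append_of_le_length ht]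

omit [DecidableEq α] in
/-- The window lemma: a length-`|Q|` window of `Q^m` starting at `x` is a rotation of `Q`. -/
theorem J_window (m x : ℕ) (Q : List α) (hQ : Q ≠ []) (hx : x + Q.length ≤ m * Q.length) :
    ((J m Q).drop x).take Q.length = Q.rotate (x % Q.length) := by
  induction m generalizing x with
  | zero => simp only [Nat.zero_mul] at hx; have := List.length_pos_iff.mpr hQ; omega
  | succ m ih =>
      have hQl : 0 < Q.length := List.length_pos_iff.mpr hQ
      rcases Nat.lt_or_ge x Q.length with h | h
      · rw [J_succ, List.drop_append_of_le_length (le_of_lt h),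
          List.take_append, List.take_of_length_le (by simp)]
        have hl : (Q.drop x).length = Q.length - x := by simp
        rw [hl, Nat.mod_eq_of_lt h, List.rotate_eq_drop_append_take (le_of_lt h)]
        congr 1
        have hxx : Q.length - (Q.length - x) = x := by omega
        rw [hxx]
        rcases Nat.eq_zero_or_pos x with rfl | hxpos
        · simp
        · have hm1 : 1 ≤ m := by
            rcases Nat.eq_zero_or_pos m with rfl | hm
            · simp only [Nat.succ_eq_add_one, Nat.zero_add, Nat.one_mul] at hx; omega
            · exact hm
          exact J_take m x Q hm1 (le_of_lt h)
      · rw [J_succ]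
        have hx' : x = Q.length + (x - Q.length) := by omega
        rw [hx', List.drop_length_add_append]
        have := ih (x - Q.length) (by
          have : (m + 1) * Q.length = Q.length + m * Q.length := by ring
          omega)
        rw [this]
        congr 1
        rw [Nat.add_mod_left]

omit [DecidableEq α] in
theorem prefRep_eq (P : List α) (p n : ℕ) (hp : 0 < p) (hP : P.length = p) :
    prefRep P n = J (n / p) P ++ P.take (n % p) := by
  have hdm := Nat.div_add_mod n p
  have hdiv_le : n / p ≤ n := Nat.div_le_self n p
  have hkey : p * (n / p) ≥ n / p := Nat.le_mul_of_pos_left _ hp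
  have hmod : n % p < p := Nat.mod_lt _ hp
  have hsplit : n = n / p + (n - n / p) := by omega
  have hdm' : n / p * p + n % p = n := by rw [Nat.mul_comm]; exact hdm
  unfold prefRep
  rw [show (List.replicate n P).flatten = J n P from rfl]
  rw [show J n P = J (n / p) P ++ J (n - n / p) P by rw [← J_add, ← hsplit]]
  rw [List.take_append]
  have hlen1 : (J (n / p) P).length = (n / p) * p := by rw [J_length, hP]
  have hle1 : (J (n / p) P).length ≤ n := by rw [hlen1]; omega
  rw [List.take_of_length_le hle1, hlen1]
  congr 1
  have hrw : n - n / p * p = n % p := by omega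
  rw [hrw]
  rcases Nat.eq_zero_or_pos (n % p) with hz | hpos
  · rw [hz]; simp
  · have hm1 : 1 ≤ n - n / p := by omega
    rw [J_take (n - n / p) (n % p) P hm1 (by rw [hP]; omega)]


end EDFacts

/-- Decomposing an edit script from `P^d ++ T` into per-block scripts. -/
theorem ed_decomp (P T : List α) : ∀ (d : ℕ) (Y : List α) (k : ℕ),
    Ed (J d P ++ T) Y k →
    ∃ (Cs : List (List α)) (ks : List ℕ) (C' : List α) (k' : ℕ),
      Cs.length = d ∧ ks.length = d ∧ Y = Cs.flatten ++ C' ∧ k = ks.sum + k' ∧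
      (∀ i, i < d → Ed P (Cs.getD i []) (ks.getD i 0)) ∧ Ed T C' k' := by
  intro d
  induction d with
  | zero =>
      intro Y k h
      refine ⟨[], [], Y, k, rfl, rfl, rfl, by simp, by omega, ?_⟩
      simpa [J] using h
  | succ d ih =>
      intro Y k h
      rw [J_succ, List.append_assoc] at h
      obtain ⟨c, rest, k₁, k₂, rfl, rfl, hc, hrest⟩ := h.split P (J d P ++ T) rfl
      obtain ⟨Cs, ks, C', k', hCs, hks, rfl, rfl, hblocks, htail⟩ := ih rest k₂ hrest
      refine ⟨c :: Cs, k₁ :: ks, C', k', by simp [hCs], by simp [hks], by simp, by simp; omega, ?_, htail⟩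
      intro i hi
      cases i with
      | zero => simpa using hc
      | succ i => simpa using hblocks i (by omega)

/-! ### new lemmas -/

theorem list_sum_eq (l : List ℕ) : l.sum = ∑ i ∈ Finset.range l.length, l.getD i 0 := by
  induction l with
  | nil => simp
  | cons a l ih =>
      rw [List.sum_cons, List.length_cons, Finset.sum_range_succ', ih]
      simp [Nat.add_comm]

theorem flatten_length_eq {α : Type*} (L : List (List α)) :
    L.flatten.length = ∑ i ∈ Finset.range L.length, (L.getD i []).length := by
  induction L with
  | nil => simp
  | cons a L ih =>
      rw [List.flatten_cons, List.length_append, List.length_cons, Finset.sum_range_succ', ih]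
      simp [Nat.add_comm]

theorem J_one {α : Type*} (Q : List α) : J 1 Q = Q := by
  show (List.replicate 1 Q).flatten = Q; simp

theorem rot_pow_aux {α : Type*} (A B : List α) :
    ∀ e, J (e + 1) (A ++ B) = A ++ (J e (B ++ A) ++ B) := by
  intro e
  induction e with
  | zero => rw [J_one]; simp [J]
  | succ e ihe =>
      rw [J_succ, ihe, J_succ]
      simp [List.append_assoc]


theorem rot_pow_le {α : Type*} [DecidableEq α] (d : ℕ) (A B : List α) :
    ED (J d (B ++ A)) (J d (A ++ B)) ≤ 2 * A.length := by
  rcases Nat.eq_zero_or_pos d with rfl | hd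
  · show ED ([] : List α) [] ≤ _; simp [ED]
  obtain ⟨e, rfl⟩ : ∃ e, d = e + 1 := ⟨d - 1, by omega⟩
  have h1 : J (e + 1) (B ++ A) = (J e (B ++ A) ++ B) ++ A := by
    rw [J_add, J_one, List.append_assoc]
  have h2 : J (e + 1) (A ++ B) = A ++ (J e (B ++ A) ++ B) := rot_pow_aux A B e
  set W := J e (B ++ A) ++ B with hW
  have ed1 : Ed ([] ++ W) (A ++ W) (A.length + 0) := (ed_nil_left A).append (Ed.refl W)
  rw [List.nil_append] at ed1
  have ed2 : Ed A [] A.length := ed_nil_right A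
  have ed3 : Ed (W ++ A) ((A ++ W) ++ []) (A.length + 0 + A.length) := ed1.append ed2
  rw [List.append_nil] at ed3
  rw [h1, h2]
  refine le_trans (ed_sound ed3) (by omega)

/-- `rotZ` at a drift `y - i*p` is rotation by `y % p`. -/
theorem rotZ_eq {α : Type*} (Q : List α) (p : ℕ) (hQ : Q.length = p) (y i : ℕ) :
    rotZ Q ((y : ℤ) - i * p) = Q.rotate (y % p) := by
  unfold rotZ
  rw [hQ]
  have h1 : ((y : ℤ) - i * p) % p = (y : ℤ) % p := by
    rw [Int.sub_emod, Int.mul_emod_left, Int.sub_zero, Int.emod_emod_of_dvd _ dvd_rfl]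
  rw [h1, ← Int.natCast_mod, Int.toNat_natCast]

theorem min_rot_le (p : ℕ) (hp : 0 < p) (s : ℤ) :
    min ((s % (p : ℤ)).toNat) (p - (s % (p : ℤ)).toNat) ≤ s.natAbs := by
  have hne : (p : ℤ) ≠ 0 := by exact_mod_cast hp.ne'
  have h0 : 0 ≤ s % p := Int.emod_nonneg s hne
  have h1 : s % p < p := Int.emod_lt_of_pos s (by exact_mod_cast hp)
  have hdm : (p : ℤ) * (s / p) + s % p = s := Int.mul_ediv_add_emod s p
  rcases le_or_gt 0 s with hs | hs
  · have hq : 0 ≤ s / p := Int.ediv_nonneg hs (by positivity)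
    have h2 : 0 ≤ (p : ℤ) * (s / p) := mul_nonneg (by positivity) hq
    omega
  · have hq : s / p < 0 := by
      by_contra h
      push_neg at h
      have : 0 ≤ (p : ℤ) * (s / p) := mul_nonneg (by positivity) h
      omega
    have h2 : (p : ℤ) * (s / p) ≤ p * (-1) :=
      mul_le_mul_of_nonneg_left (by omega) (by positivity)
    omega


theorem main {α : Type*} [DecidableEq α] (P Q : List α) (p : ℕ)
    (hp : 0 < p) (hP : P.length = p) (hQ : Q.length = p) (n : ℕ) (hn : 0 < n) :
    ED (prefRep P n) (prefRep Q n) ≤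
        ED (P.take (n % p)) (Q.take (n % p)) +
          sInf {m : ℕ | ∃ s : ℤ, m = (n / p) * ED P (rotZ Q s) + 2 * s.natAbs} ∧
      ED (P.take (n % p)) (Q.take (n % p)) +
          sInf {m : ℕ | ∃ s : ℤ, m = (n / p) * ED P (rotZ Q s) + 2 * s.natAbs} ≤
        3 * ED (prefRep P n) (prefRep Q n) := by
  classical
  set d := n / p with hd
  set r := n % p with hr
  have hdm : d * p + r = n := by rw [Nat.mul_comm]; exact Nat.div_add_mod n p
  have hr_lt : r < p := Nat.mod_lt _ hp
  have hX : prefRep P n = J d P ++ P.take r := prefRep_eq P p n hp hP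
  have hY : prefRep Q n = J d Q ++ Q.take r := prefRep_eq Q p n hp hQ
  have hQne : Q ≠ [] := by
    intro h; rw [h] at hQ; simp at hQ; omega
  set S := {m : ℕ | ∃ s : ℤ, m = d * ED P (rotZ Q s) + 2 * s.natAbs} with hSdef
  have hSne : S.Nonempty := ⟨d * ED P (rotZ Q 0) + 2 * (0 : ℤ).natAbs, 0, rfl⟩
  constructor
  · -- upper bound
    obtain ⟨s₀, hs₀⟩ := Nat.sInf_mem hSne
    set t := ((s₀ % (p : ℤ))).toNat with ht
    have hne : (p : ℤ) ≠ 0 := by exact_mod_cast hp.ne'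
    have h0 : 0 ≤ s₀ % (p : ℤ) := Int.emod_nonneg s₀ hne
    have h1 : s₀ % (p : ℤ) < p := Int.emod_lt_of_pos s₀ (by exact_mod_cast hp)
    have htlt : t < p := by omega
    have hrotz : rotZ Q s₀ = Q.rotate t := by unfold rotZ; rw [hQ]
    have hRdrop : Q.rotate t = Q.drop t ++ Q.take t :=
      List.rotate_eq_drop_append_take (by omega)
    have hQdec : Q.take t ++ Q.drop t = Q := List.take_append_drop t Q
    have bound1 : ED (J d (Q.rotate t)) (J d Q) ≤ 2 * t := by
      have h := rot_pow_le d (Q.take t) (Q.drop t)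
      rw [hQdec, ← hRdrop] at h
      have hlt : (Q.take t).length = t := by
        rw [List.length_take]; omega
      rw [hlt] at h; exact h
    have bound2 : ED (J d (Q.rotate t)) (J d Q) ≤ 2 * (p - t) := by
      have h := rot_pow_le d (Q.drop t) (Q.take t)
      rw [hQdec, ← hRdrop] at h
      have hlt : (Q.drop t).length = p - t := by
        rw [List.length_drop]; omega
      rw [hlt] at h
      rw [ED_symm]; exact h
    have hminb : ED (J d (Q.rotate t)) (J d Q) ≤ 2 * min t (p - t) := by
      rcases le_total t (p - t) with h | h
      · rw [min_eq_left h]; exact bound1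
      · rw [min_eq_right h]; exact bound2
    have hmin : min t (p - t) ≤ s₀.natAbs := min_rot_le p hp s₀
    calc ED (prefRep P n) (prefRep Q n)
        ≤ ED (J d P) (J d Q) + ED (P.take r) (Q.take r) := by
          rw [hX, hY]; exact ED_append_le _ _ _ _
      _ ≤ (ED (J d P) (J d (Q.rotate t)) + ED (J d (Q.rotate t)) (J d Q))
            + ED (P.take r) (Q.take r) :=
          Nat.add_le_add_right (ED_triangle _ _ _) _
      _ ≤ (d * ED P (Q.rotate t) + 2 * min t (p - t)) + ED (P.take r) (Q.take r) := by
          have := ED_pow_le d P (Q.rotate t)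
          omega
      _ ≤ ED (P.take r) (Q.take r) + (d * ED P (rotZ Q s₀) + 2 * s₀.natAbs) := by
          rw [hrotz]
          have : d * ED P (Q.rotate t) + 2 * min t (p - t)
              ≤ d * ED P (Q.rotate t) + 2 * s₀.natAbs := by omega
          omega
      _ = ED (P.take r) (Q.take r) + sInf S := by rw [hs₀]
  · -- lower bound
    rcases Nat.eq_zero_or_pos d with hd0 | hdpos
    · have h0S : (0 : ℕ) ∈ S := ⟨0, by simp [hd0]⟩
      have hinf0 : sInf S = 0 := by
        have := Nat.sInf_le h0S; omega
      rw [hinf0, hX, hY, hd0]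
      have hJ0 : J 0 P = [] := rfl
      have hJ0' : J 0 Q = [] := rfl
      rw [hJ0, hJ0', List.nil_append, List.nil_append]
      omega
    · -- main case
      set k := ED (prefRep P n) (prefRep Q n) with hk
      have hEdk : Ed (J d P ++ P.take r) (J d Q ++ Q.take r) k := by
        rw [← hX, ← hY]; exact ed_complete _ _
      obtain ⟨Cs, ks, C', k', hCsl, hksl, hYflat, hksum, hblocks, htail⟩ :=
        ed_decomp P (P.take r) d _ k hEdk
      set len : ℕ → ℕ := fun i => (Cs.getD i []).length with hlen
      set c : ℕ → ℕ := fun i => ks.getD i 0 with hc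
      set a : ℕ → ℕ := fun i => ∑ j ∈ Finset.range i, len j with ha
      set δ : ℕ → ℤ := fun i => (len i : ℤ) - p with hδ
      set b : ℕ → ℕ := fun i => (δ i).natAbs with hb
      set σ : ℕ → ℤ := fun i => ∑ j ∈ Finset.range i, δ j with hσ
      have ha_succ : ∀ i, a (i + 1) = a i + len i := fun i => Finset.sum_range_succ len i
      have hYlen : (J d Q ++ Q.take r).length = n := by
        rw [List.length_append, J_length, hQ, List.length_take, hQ, min_eq_left (by omega : r ≤ p)]
        omega
      -- drop structure
      have hdrop : ∀ i, i ≤ d → (J d Q ++ Q.take r).drop (a i) = (Cs.drop i).flatten ++ C' := by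
        intro i hi
        induction i with
        | zero =>
            have : a 0 = 0 := by simp [ha]
            rw [this, List.drop_zero, hYflat, List.drop_zero]
        | succ i ihi =>
            have hilt : i < d := by omega
            have hil : i < Cs.length := by omega
            rw [ha_succ, ← List.drop_drop, ihi (by omega)]
            rw [List.drop_eq_getElem_cons hil, List.flatten_cons, List.append_assoc]
            have hleni : (Cs[i]).length = len i := by
              simp only [hlen]; rw [List.getD_eq_getElem Cs [] hil]
            rw [← hleni, List.drop_left]
      have haflat : a d = Cs.flatten.length := by
        rw [flatten_length_eq, hCsl, ha]
      have ha_d : a d + C'.length = n := by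
        have := congrArg List.length hYflat
        rw [hYlen, List.length_append] at this
        omega
      have ha_mono : ∀ i, i ≤ d → a i ≤ a d := by
        intro i hi
        exact Finset.sum_le_sum_of_subset (Finset.range_subset_range.mpr hi)
      have ha_le : ∀ i, i ≤ d → a i ≤ n := by
        intro i hi
        have := ha_mono i hi; omega
      -- Z and windows
      set Z := J (d + 3) Q with hZ
      have hZdrop : Z.drop p = J (d + 2) Q := by
        rw [hZ, show d + 3 = (d + 2) + 1 from rfl, J_succ, ← hQ, List.drop_left]
      have hn_le : n ≤ d * p + p := by omega
      have hYZ : (J d Q ++ Q.take r) = (Z.drop p).take n := by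
        rw [hZdrop, show d + 2 = d + 2 from rfl, J_add d 2,
          List.take_append]
        have l1 : (J d Q).length = d * p := by rw [J_length, hQ]
        rw [List.take_of_length_le (i := n) (l := J d Q) (by rw [l1]; omega), l1]
        congr 1
        have : n - d * p = r := by omega
        rw [this, J_take 2 r Q (by omega) (by omega)]
      have hwin : ∀ x, x ≤ n + p → (Z.drop x).take p = Q.rotate (x % p) := by
        intro x hx
        have hcond : x + Q.length ≤ (d + 3) * Q.length := by
          rw [hQ]
          have : (d + 3) * p = d * p + 3 * p := by ring
          omega
        have := J_window (d + 3) x Q hQne hcond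
        rw [hQ] at this
        exact this
      have hYdropZ : ∀ y, y ≤ n → (J d Q ++ Q.take r).drop y = (Z.drop (p + y)).take (n - y) := by
        intro y hy
        rw [hYZ, List.drop_take, List.drop_drop]
      -- block strings
      set C : ℕ → List α := fun i => Cs.getD i [] with hC
      have hCtake : ∀ i, i < d → C i = (Z.drop (p + a i)).take (len i) := by
        intro i hi
        have hil : i < Cs.length := by omega
        have h1 : (J d Q ++ Q.take r).drop (a i) = C i ++ ((Cs.drop (i + 1)).flatten ++ C') := by
          rw [hdrop i hi.le, List.drop_eq_getElem_cons hil, List.flatten_cons,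
            List.append_assoc]
          simp only [hC, List.getD_eq_getElem Cs [] hil]
        have h2 : C i = ((J d Q ++ Q.take r).drop (a i)).take (len i) := by
          rw [h1, List.take_left' (by simp only [hC, hlen])]
        have h3 : len i ≤ n - a i := by
          have := ha_le (i + 1) (by omega)
          have := ha_succ i
          omega
        rw [h2, hYdropZ (a i) (ha_le i hi.le), List.take_take, min_eq_left h3]
      -- cost and length facts
      have hlenb : ∀ i, i < d → b i ≤ c i := by
        intro i hi
        have h := (hblocks i hi).length_le
        rw [hP] at h
        have h1 : (Cs.getD i []).length = len i := by simp only [hlen]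
        have h2 : (ks.getD i 0) = c i := by simp only [hc]
        rw [h1, h2] at h
        simp only [hb, hδ]
        omega
      -- drift identity
      have hsa : ∀ i, (a i : ℤ) = i * p + σ i := by
        intro i
        simp only [ha, hσ, hδ]
        push_cast
        rw [Finset.sum_sub_distrib, Finset.sum_const, Finset.card_range]
        push_cast
        ring
      -- left-aligned rotation bound
      have hrotL : ∀ i, i < d → ED P (rotZ Q (σ i)) ≤ c i + b i := by
        intro i hi
        have hwini : (Z.drop (p + a i)).take p = Q.rotate (a i % p) := by
          rw [hwin (p + a i) (by have := ha_le i hi.le; omega), Nat.add_mod_left]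
        have hrotz : rotZ Q (σ i) = Q.rotate (a i % p) := by
          have hσi : σ i = (a i : ℤ) - i * p := by rw [hsa i]; ring
          rw [hσi]
          exact rotZ_eq Q p hQ (a i) i
        have hPC : ED P (C i) ≤ c i := ed_sound (hblocks i hi)
        have hCrot : ED (C i) (rotZ Q (σ i)) ≤ b i := by
          rw [hrotz, ← hwini, hCtake i hi]
          rcases le_total (len i) p with h | h
          · have := ED_take_take (Z.drop (p + a i)) (len i) p h
            simp only [hb, hδ]
            omega
          · have := ED_take_take (Z.drop (p + a i)) p (len i) h
            rw [ED_symm]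
            simp only [hb, hδ]
            omega
        calc ED P (rotZ Q (σ i)) ≤ ED P (C i) + ED (C i) (rotZ Q (σ i)) := ED_triangle _ _ _
          _ ≤ c i + b i := by omega
      -- right-aligned rotation bound
      have hrotR : ∀ i, i < d → ED P (rotZ Q (σ (i + 1))) ≤ c i + b i := by
        intro i hi
        have hai1 : a (i + 1) = a i + len i := ha_succ i
        have hwini : (Z.drop (a i + len i)).take p = Q.rotate (a (i + 1) % p) := by
          rw [← hai1, hwin (a (i + 1)) (by have := ha_le (i + 1) (by omega); omega)]
        have hrotz : rotZ Q (σ (i + 1)) = Q.rotate (a (i + 1) % p) := by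
          have hσi : σ (i + 1) = (a (i + 1) : ℤ) - (i + 1) * p := by
            rw [hsa (i + 1)]; push_cast; ring
          rw [hσi]
          exact rotZ_eq Q p hQ (a (i + 1)) (i + 1)
        have hPC : ED P (C i) ≤ c i := ed_sound (hblocks i hi)
        have hCrot : ED (C i) (rotZ Q (σ (i + 1))) ≤ b i := by
          rw [hrotz, ← hwini]
          rcases le_total (len i) p with h | h
          · -- C i is a suffix of the window
            have hCW : C i = ((Z.drop (a i + len i)).take p).drop (p - len i) := by
              rw [List.drop_take, List.drop_drop, hCtake i hi,
                show a i + len i + (p - len i) = p + a i by omega,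
                show p - (p - len i) = len i by omega]
            rw [hCW]
            have h2 := ED_drop_drop ((Z.drop (a i + len i)).take p) 0 (p - len i) (by omega)
            rw [List.drop_zero] at h2
            rw [ED_symm]
            simp only [hb, hδ]
            omega
          · -- window is a suffix of C i
            have hCW : (Z.drop (a i + len i)).take p = (C i).drop (len i - p) := by
              rw [hCtake i hi, List.drop_take, List.drop_drop,
                show p + a i + (len i - p) = a i + len i by omega,
                show len i - (len i - p) = p by omega]
            rw [hCW]
            have h2 := ED_drop_drop (C i) 0 (len i - p) (by omega)
            rw [List.drop_zero] at h2
            simp only [hb, hδ]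
            omega
        calc ED P (rotZ Q (σ (i + 1))) ≤ ED P (C i) + ED (C i) (rotZ Q (σ (i + 1))) :=
            ED_triangle _ _ _
          _ ≤ c i + b i := by omega
      -- tail facts
      have hPtl : (P.take r).length = r := by
        rw [List.length_take, hP]; omega
      have hC'len : C'.length = n - a d := by omega
      have hsd : (σ d).natAbs ≤ k' := by
        have h := htail.length_le
        rw [hPtl] at h
        have h2 : (a d : ℤ) = d * p + σ d := hsa d
        omega
      have hC'drop : C' = (J d Q ++ Q.take r).drop (a d) := by
        rw [hdrop d le_rfl]
        have : Cs.drop d = [] := by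
          rw [← hCsl]; exact List.drop_length
        rw [this, List.flatten_nil, List.nil_append]
      have hQr : Q.take r = (J d Q ++ Q.take r).drop (d * p) := by
        have hl : (J d Q).length = d * p := by rw [J_length, hQ]
        rw [← hl, List.drop_left]
      have htailED : ED (P.take r) (Q.take r) ≤ 2 * k' := by
        have h1 : ED (P.take r) C' ≤ k' := ed_sound htail
        have h2 : ED C' (Q.take r) ≤ (σ d).natAbs := by
          rw [hQr, hC'drop]
          have h3 : (a d : ℤ) = d * p + σ d := hsa d
          have h4 : ((d * p : ℕ) : ℤ) = (d : ℤ) * p := by push_cast; ring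
          rcases le_total (a d) (d * p) with h | h
          · have := ED_drop_drop (J d Q ++ Q.take r) (a d) (d * p) h
            omega
          · have := ED_drop_drop (J d Q ++ Q.take r) (d * p) (a d) h
            rw [ED_symm]
            omega
        calc ED (P.take r) (Q.take r) ≤ ED (P.take r) C' + ED C' (Q.take r) :=
            ED_triangle _ _ _
          _ ≤ 2 * k' := by omega
      -- selection of the best block
      obtain ⟨i₀, hi₀mem, hi₀min⟩ :=
        Finset.exists_min_image (Finset.range d) (fun i => c i + b i)
          ⟨0, Finset.mem_range.mpr hdpos⟩
      have hi₀ : i₀ < d := Finset.mem_range.mp hi₀mem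
      have hdmin : d * (c i₀ + b i₀) ≤ ∑ i ∈ Finset.range d, (c i + b i) := by
        have := Finset.card_nsmul_le_sum (Finset.range d) (fun i => c i + b i)
          (c i₀ + b i₀) (fun i hi => hi₀min i hi)
        rw [Finset.card_range, smul_eq_mul] at this
        exact this
      -- choice of shift
      set sstar := if (σ i₀).natAbs ≤ (σ (i₀ + 1)).natAbs then σ i₀ else σ (i₀ + 1) with hsstar
      have hrotstar : ED P (rotZ Q sstar) ≤ c i₀ + b i₀ := by
        rw [hsstar]
        split_ifs
        · exact hrotL i₀ hi₀
        · exact hrotR i₀ hi₀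
      have h2star : 2 * sstar.natAbs ≤ (σ i₀).natAbs + (σ (i₀ + 1)).natAbs := by
        rw [hsstar]; split_ifs <;> omega
      -- bounds on the two shifts
      have habs : ∀ m, (∑ j ∈ Finset.range m, δ j).natAbs ≤ ∑ j ∈ Finset.range m, b j := by
        intro m
        have h1 := Finset.abs_sum_le_sum_abs δ (Finset.range m)
        have h2 : ∑ j ∈ Finset.range m, |δ j| = ((∑ j ∈ Finset.range m, b j : ℕ) : ℤ) := by
          rw [Nat.cast_sum]
          refine Finset.sum_congr rfl fun j _ => ?_
          simp only [hb, Int.abs_eq_natAbs]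
        rw [h2, Int.abs_eq_natAbs] at h1
        omega
      have hs1 : (σ i₀).natAbs ≤ ∑ j ∈ Finset.range i₀, b j := habs i₀
      have hs2 : (σ (i₀ + 1)).natAbs ≤ k' + ∑ j ∈ Finset.Ico (i₀ + 1) d, b j := by
        have hsplit : σ (i₀ + 1) + ∑ j ∈ Finset.Ico (i₀ + 1) d, δ j = σ d := by
          rw [hσ]
          exact Finset.sum_range_add_sum_Ico δ (by omega)
        have h1 := Finset.abs_sum_le_sum_abs δ (Finset.Ico (i₀ + 1) d)
        have h2 : ∑ j ∈ Finset.Ico (i₀ + 1) d, |δ j| =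
            ((∑ j ∈ Finset.Ico (i₀ + 1) d, b j : ℕ) : ℤ) := by
          rw [Nat.cast_sum]
          refine Finset.sum_congr rfl fun j _ => ?_
          simp only [hb, Int.abs_eq_natAbs]
        rw [h2, Int.abs_eq_natAbs] at h1
        omega
      -- sum bounds
      have hsumsplit : ∑ j ∈ Finset.range i₀, b j + ∑ j ∈ Finset.Ico i₀ d, b j
          = ∑ j ∈ Finset.range d, b j := Finset.sum_range_add_sum_Ico b (by omega)
      have hIcosub : ∑ j ∈ Finset.Ico (i₀ + 1) d, b j ≤ ∑ j ∈ Finset.Ico i₀ d, b j :=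
        Finset.sum_le_sum_of_subset (Finset.Ico_subset_Ico (by omega) le_rfl)
      have hbc : ∑ j ∈ Finset.range d, b j ≤ ∑ j ∈ Finset.range d, c j :=
        Finset.sum_le_sum fun i hi => hlenb i (Finset.mem_range.mp hi)
      have hsumadd : ∑ i ∈ Finset.range d, (c i + b i)
          = ∑ i ∈ Finset.range d, c i + ∑ i ∈ Finset.range d, b i :=
        Finset.sum_add_distrib
      have hksum' : ks.sum = ∑ i ∈ Finset.range d, c i := by
        rw [list_sum_eq, hksl]
      -- final witness
      have hwit : d * ED P (rotZ Q sstar) + 2 * sstar.natAbs ∈ S := ⟨sstar, rfl⟩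
      have hinf : sInf S ≤ d * ED P (rotZ Q sstar) + 2 * sstar.natAbs := Nat.sInf_le hwit
      have hmul : d * ED P (rotZ Q sstar) ≤ d * (c i₀ + b i₀) :=
        Nat.mul_le_mul_left d hrotstar
      omega


end EDAux

/-- 3-approximation of the edit distance of two periodic strings: with
`|P| = |Q| = p > 0`, `X = P^∞[0..n)`, `Y = Q^∞[0..n)`, `d = ⌊n/p⌋`, `r = n mod p`,
the quantity `ED(P[0..r), Q[0..r)) + min_{s ∈ ℤ} (d·ED(P, Q^{↻s}) + 2|s|)`
is between `ED(X, Y)` and `3·ED(X, Y)`. -/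
theorem ed_periodic_three_approx {α : Type*} [DecidableEq α] (P Q : List α) (p : ℕ)
    (hp : 0 < p) (hP : P.length = p) (hQ : Q.length = p) (n : ℕ) (hn : 0 < n) :
    ED (prefRep P n) (prefRep Q n) ≤
        ED (P.take (n % p)) (Q.take (n % p)) +
          sInf {m : ℕ | ∃ s : ℤ, m = (n / p) * ED P (rotZ Q s) + 2 * s.natAbs} ∧
      ED (P.take (n % p)) (Q.take (n % p)) +
          sInf {m : ℕ | ∃ s : ℤ, m = (n / p) * ED P (rotZ Q s) + 2 * s.natAbs} ≤
        3 * ED (prefRep P n) (prefRep Q n) :=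
  EDAux.main P Q p hp hP hQ n hn
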